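/- Let K/L be an abelian chief factor of a finite group G and let φ be an irreducible character of L that is invariant in G. Then either φ extends to an irreducible character of K, or φ is fully ramified with respect to K/L (i.e., φ^K = eθ for a single irreducible character θ of K with e² = |K:L|). -/

import Mathlib

open CategoryTheory Module
open scoped Classical
open scoped MonoidalCategory

set_option linter.unusedSectionVars false

namespace Stmt14Aux

noncomputable section

variable {H : Type} [Group H] [Fintype H]

lemma hom_comm {V W : FDRep ℂ H} (f : V ⟶ W) (g : H) (x : V) :
    f.hom.hom.hom (V.ρ g x) = W.ρ g (f.hom.hom.hom x) :=
  LinearMap.congr_fun (congrArg (fun φ => φ.hom.hom) (f.comm g)) x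

lemma hom_congr {V W : FDRep ℂ H} {f g : V ⟶ W} (h : f = g) (x : V) : f.hom.hom.hom x = g.hom.hom.hom x :=
  by rw [h]

lemma comp_apply' {V W X : FDRep ℂ H} (f : V ⟶ W) (g : W ⟶ X) (x : V) :
    (f ≫ g).hom.hom.hom x = g.hom.hom.hom (f.hom.hom.hom x) := rfl

lemma id_apply' (V : FDRep ℂ H) (x : V) : (𝟙 V : V ⟶ V).hom.hom.hom x = x := rfl

lemma zero_apply' (V W : FDRep ℂ H) (x : V) : (0 : V ⟶ W).hom.hom.hom x = 0 := by
  rw [Action.zero_hom]; rfl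

/-- invariant submodule -/
def IsInvt (V : FDRep ℂ H) (p : Submodule ℂ V) : Prop := ∀ (g : H), ∀ x ∈ p, V.ρ g x ∈ p

def subρ (V : FDRep ℂ H) (p : Submodule ℂ V) (hp : IsInvt V p) : Representation ℂ H p where
  toFun g := (V.ρ g).restrict (hp g)
  map_one' := by ext x; simp [LinearMap.restrict_apply]
  map_mul' g h := by ext x; simp [LinearMap.restrict_apply]

def subrep (V : FDRep ℂ H) (p : Submodule ℂ V) (hp : IsInvt V p) : FDRep ℂ H :=
  FDRep.of (subρ V p hp)

@[simp] lemma subrep_ρ_apply (V : FDRep ℂ H) (p : Submodule ℂ V) (hp : IsInvt V p)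
    (g : H) (x : p) : ((subrep V p hp).ρ g x) = (⟨V.ρ g (x : V), hp g x x.2⟩ : p) := rfl

def subrepIncl (V : FDRep ℂ H) (p : Submodule ℂ V) (hp : IsInvt V p) :
    subrep V p hp ⟶ V :=
  ⟨FGModuleCat.ofHom p.subtype, fun g => by ext x; rfl⟩

@[simp] lemma subrepIncl_hom (V : FDRep ℂ H) (p : Submodule ℂ V) (hp : IsInvt V p) :
    (subrepIncl V p hp).hom.hom.hom = p.subtype := rfl

lemma hom_ne_zero_iff {V W : FDRep ℂ H} (f : V ⟶ W) : f ≠ 0 ↔ f.hom.hom.hom ≠ 0 := by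
  constructor
  · intro h hh
    exact h (by apply Action.Hom.ext; apply FGModuleCat.hom_ext; exact hh)
  · intro h hh; exact h (by rw [hh]; rfl)

lemma range_invt {V W : FDRep ℂ H} (f : V ⟶ W) : IsInvt W (LinearMap.range f.hom.hom.hom) := by
  rintro g x ⟨y, rfl⟩
  exact ⟨V.ρ g y, hom_comm f g y⟩

lemma map_invt {V W : FDRep ℂ H} (f : V ⟶ W) (r : Submodule ℂ V) (hr : IsInvt V r) :
    IsInvt W (r.map f.hom.hom.hom) := by
  rintro g x ⟨y, hy, rfl⟩
  exact ⟨V.ρ g y, hr g y hy, hom_comm f g y⟩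

lemma ker_invt {V W : FDRep ℂ H} (f : V ⟶ W) : IsInvt V (LinearMap.ker f.hom.hom.hom) := by
  intro g x hx
  simp only [LinearMap.mem_ker] at hx ⊢
  exact (hom_comm f g x).trans ((congrArg (W.ρ g) hx).trans (map_zero _))

lemma ker_eq_bot_of_mono {V W : FDRep ℂ H} (f : V ⟶ W) [Mono f] :
    LinearMap.ker f.hom.hom.hom = ⊥ := by
  have h0 : subrepIncl V _ (ker_invt f) ≫ f = (0 : subrep V _ (ker_invt f) ⟶ W) := by
    apply Action.Hom.ext
    ext x
    show f.hom.hom.hom ((LinearMap.ker f.hom.hom.hom).subtype x) = _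
    rw [Action.zero_hom]
    exact x.2
  have h1 : subrepIncl V _ (ker_invt f) = (0 : subrep V _ (ker_invt f) ⟶ V) :=
    (cancel_mono f).mp (by rw [h0, Limits.zero_comp])
  rw [Submodule.eq_bot_iff]
  intro x hx
  have hx2 := hom_congr h1 ⟨x, hx⟩
  exact hx2.trans (zero_apply' _ _ _)

lemma ker_eq_bot_of_ne_zero {V W : FDRep ℂ H} [Simple V] (f : V ⟶ W) (hf : f ≠ 0) :
    LinearMap.ker f.hom.hom.hom = ⊥ :=
  haveI : Mono f := mono_of_nonzero_from_simple hf
  ker_eq_bot_of_mono f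

/-- from a bijective equivariant map, build an isomorphism -/
lemma isIso_of_bijective {V W : FDRep ℂ H} (f : V ⟶ W) (hf : Function.Bijective f.hom.hom.hom) :
    IsIso f := by
  let e : (V : Type) ≃ₗ[ℂ] (W : Type) := LinearEquiv.ofBijective f.hom.hom.hom hf
  have h1 : ∀ y, f.hom.hom.hom (e.symm y) = y := fun y => e.apply_symm_apply y
  refine ⟨⟨⟨FGModuleCat.ofHom (e.symm : (W : Type) →ₗ[ℂ] (V : Type)), fun g => ?_⟩, ?_, ?_⟩⟩
  · ext x
    show e.symm (W.ρ g x) = V.ρ g (e.symm x)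
    apply hf.1
    calc f.hom.hom.hom (e.symm (W.ρ g x)) = W.ρ g x := h1 _
    _ = W.ρ g (f.hom.hom.hom (e.symm x)) := by rw [h1]
    _ = f.hom.hom.hom (V.ρ g (e.symm x)) := (hom_comm f g _).symm
  · apply Action.Hom.ext; ext x
    exact e.symm_apply_apply x
  · apply Action.Hom.ext; ext x
    exact e.apply_symm_apply x

lemma simple_of_irred (V : FDRep ℂ H) (h0 : finrank ℂ V ≠ 0)
    (hmin : ∀ p : Submodule ℂ V, IsInvt V p → p = ⊥ ∨ p = ⊤) : Simple V := by
  constructor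
  intro Y f hm
  constructor
  · intro hiso h
    obtain ⟨ib, -, hib⟩ := hiso.out
    have hpt : ∀ x : V, f.hom.hom.hom (ib.hom.hom.hom x) = x := by
      intro x
      have := hom_congr hib x
      rwa [comp_apply', id_apply'] at this
    have hzero : ∀ y : Y, f.hom.hom.hom y = 0 := fun y => by
      have hy : f.hom.hom.hom y = (0 : Y ⟶ V).hom.hom.hom y := hom_congr h y
      rwa [zero_apply'] at hy
    have hall : ∀ x : V, x = 0 := fun x => (hpt x).symm.trans (hzero _)
    apply h0
    rw [finrank_zero_iff]
    exact ⟨fun a b => (hall a).trans (hall b).symm⟩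
  · intro hf
    have hker : LinearMap.ker f.hom.hom.hom = ⊥ := ker_eq_bot_of_mono f
    have hrange : LinearMap.range f.hom.hom.hom = ⊤ := by
      rcases hmin _ (range_invt f) with h | h
      · exfalso
        rw [hom_ne_zero_iff] at hf
        exact hf (LinearMap.range_eq_bot.mp h)
      · exact h
    exact isIso_of_bijective f
      ⟨LinearMap.ker_eq_bot.mp hker, LinearMap.range_eq_top.mp hrange⟩

lemma finrank_pos_of_simple (V : FDRep ℂ H) [Simple V] : 0 < finrank ℂ V := by
  rcases Nat.eq_zero_or_pos (finrank ℂ V) with h | h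
  · exfalso
    have hsub : Subsingleton (V : Type) := finrank_zero_iff.mp h
    refine id_nonzero V ?_
    apply Action.Hom.ext; ext x
    exact @Subsingleton.elim _ hsub _ _
  · exact h

lemma irred_of_simple (V : FDRep ℂ H) [Simple V] :
    ∀ p : Submodule ℂ V, IsInvt V p → p = ⊥ ∨ p = ⊤ := by
  intro p hp
  by_cases hbot : p = ⊥
  · exact Or.inl hbot
  right
  have hmono : Mono (subrepIncl V p hp) := by
    constructor
    intro Z a b hab
    apply Action.Hom.ext; ext x
    have := hom_congr hab x
    rw [comp_apply', comp_apply'] at this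
    exact Subtype.ext this
  have hne : subrepIncl V p hp ≠ 0 := by
    rw [hom_ne_zero_iff]
    intro h
    apply hbot
    rw [Submodule.eq_bot_iff]
    intro x hx
    exact LinearMap.congr_fun h ⟨x, hx⟩
  have hiso : IsIso (subrepIncl V p hp) := (Simple.mono_isIso_iff_nonzero _).mpr hne
  rw [Submodule.eq_top_iff']
  intro x
  obtain ⟨iv, -, hinv2⟩ := hiso.out
  have hpt : (subrepIncl V p hp).hom.hom.hom (iv.hom.hom.hom x) = x := by
    have := hom_congr hinv2 x
    rwa [comp_apply', id_apply'] at this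
  rw [← Submodule.range_subtype p]
  exact ⟨iv.hom.hom.hom x, hpt⟩


lemma ρ_mul_apply (V : FDRep ℂ H) (a b : H) (x : V) :
    V.ρ (a * b) x = V.ρ a (V.ρ b x) := by rw [map_mul]; rfl

lemma ρ_inv_apply (V : FDRep ℂ H) (g : H) (x : V) : V.ρ g (V.ρ g⁻¹ x) = x := by
  rw [← ρ_mul_apply, mul_inv_cancel, map_one]; rfl

instance : Invertible ((Fintype.card H : ℂ)) :=
  invertibleOfNonzero (Nat.cast_ne_zero.mpr Fintype.card_ne_zero)

instance : Invertible ((Nat.card H : ℂ)) :=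
  invertibleOfNonzero (Nat.cast_ne_zero.mpr Nat.card_pos.ne')

/-- general character formula for hom spaces -/
lemma char_homDim (V W : FDRep ℂ H) :
    ⅟(Fintype.card H : ℂ) • ∑ g : H, V.character g * W.character g⁻¹ =
      (finrank ℂ (W ⟶ V) : ℂ) := by
  rw [← FDRep.scalar_product_char_eq_finrank_equivariant, smul_eq_mul, invOf_eq_inv,
    Nat.card_eq_fintype_card]

lemma char_homDim' (V W : FDRep ℂ H) :
    (finrank ℂ (W ⟶ V) : ℂ) =
      (Fintype.card H : ℂ)⁻¹ * ∑ g : H, V.character g * W.character g⁻¹ := by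
  rw [← char_homDim V W, smul_eq_mul, invOf_eq_inv]

/-- Maschke: invariant complement -/
lemma exists_invt_compl (V : FDRep ℂ H) (p : Submodule ℂ V) (hp : IsInvt V p) :
    ∃ q, IsInvt V q ∧ IsCompl p q := by
  obtain ⟨q₀, hq₀⟩ := Submodule.exists_isCompl p
  set π₀ : (V : Type) →ₗ[ℂ] p := Submodule.linearProjOfIsCompl p q₀ hq₀ with hπ₀
  set c : ℂ := (Fintype.card H : ℂ)⁻¹ with hc
  set πsum : (V : Type) →ₗ[ℂ] (V : Type) :=
    c • ∑ g : H, (V.ρ g) ∘ₗ ((p.subtype ∘ₗ π₀) ∘ₗ (V.ρ g⁻¹)) with hπsum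
  have hcard : (Fintype.card H : ℂ) ≠ 0 := Nat.cast_ne_zero.mpr Fintype.card_ne_zero
  have happ : ∀ x, πsum x = c • ∑ g : H, V.ρ g (p.subtype (π₀ (V.ρ g⁻¹ x))) := by
    intro x
    rw [hπsum]
    simp [LinearMap.sum_apply]
  have hrange : ∀ x, πsum x ∈ p := by
    intro x
    rw [happ]
    refine Submodule.smul_mem _ _ (Submodule.sum_mem _ fun g _ => ?_)
    exact hp g _ (π₀ (V.ρ g⁻¹ x)).2
  have hid : ∀ x ∈ p, πsum x = x := by
    intro x hx
    rw [happ]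
    have hterm : ∀ g : H, V.ρ g (p.subtype (π₀ (V.ρ g⁻¹ x))) = x := by
      intro g
      have h1 : V.ρ g⁻¹ x ∈ p := hp g⁻¹ x hx
      have h2 : π₀ (V.ρ g⁻¹ x) = ⟨V.ρ g⁻¹ x, h1⟩ :=
        Submodule.linearProjOfIsCompl_apply_left hq₀ ⟨V.ρ g⁻¹ x, h1⟩
      rw [h2]
      exact ρ_inv_apply V g x
    rw [Finset.sum_congr rfl (fun g _ => hterm g), Finset.sum_const, Finset.card_univ]
    rw [← Nat.cast_smul_eq_nsmul ℂ, smul_smul, hc, inv_mul_cancel₀ hcard, one_smul]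
  have hcomm : ∀ (h : H) x, πsum (V.ρ h x) = V.ρ h (πsum x) := by
    intro h x
    rw [happ, happ, map_smul]
    congr 1
    rw [map_sum]
    refine Fintype.sum_equiv (Equiv.mulLeft h⁻¹) _ _ fun g => ?_
    show V.ρ g (p.subtype (π₀ (V.ρ g⁻¹ (V.ρ h x)))) =
      V.ρ h (V.ρ (h⁻¹ * g) (p.subtype (π₀ (V.ρ (h⁻¹ * g)⁻¹ x))))
    have e1 : V.ρ (h⁻¹ * g)⁻¹ x = V.ρ g⁻¹ (V.ρ h x) := by
      rw [mul_inv_rev, inv_inv, ρ_mul_apply]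
    have e2 : ∀ y, V.ρ h (V.ρ (h⁻¹ * g) y) = V.ρ g y := by
      intro y
      rw [← ρ_mul_apply, mul_inv_cancel_left]
    rw [e1, e2]
  set π : (V : Type) →ₗ[ℂ] p := LinearMap.codRestrict p πsum hrange with hπ
  have hproj : ∀ x : p, π (x : V) = x := fun x => Subtype.ext (hid x x.2)
  have hcompl : IsCompl p (LinearMap.ker π) := LinearMap.isCompl_of_proj hproj
  refine ⟨LinearMap.ker π, ?_, hcompl⟩
  intro g x hx
  have hx' : πsum x = 0 := congrArg Subtype.val (LinearMap.mem_ker.mp hx)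
  have hgx : πsum (V.ρ g x) = 0 := by rw [hcomm, hx', map_zero]
  exact LinearMap.mem_ker.mpr (Subtype.ext hgx)

lemma subrep_char (V : FDRep ℂ H) (p : Submodule ℂ V) (hp : IsInvt V p) (g : H) :
    (subrep V p hp).character g = LinearMap.trace ℂ p ((V.ρ g).restrict (hp g)) := rfl

/-- character additivity over complementary invariant submodules -/
lemma char_add_of_isCompl (V : FDRep ℂ H) {p q : Submodule ℂ V} (hp : IsInvt V p)
    (hq : IsInvt V q) (h : IsCompl p q) (g : H) :
    V.character g = (subrep V p hp).character g + (subrep V q hq).character g := by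
  set e : (↥p × ↥q) ≃ₗ[ℂ] (V : Type) := Submodule.prodEquivOfIsCompl p q h with he
  set F : (↥p × ↥q) →ₗ[ℂ] (↥p × ↥q) :=
    LinearMap.prodMap ((V.ρ g).restrict (hp g)) ((V.ρ g).restrict (hq g)) with hF
  have key : ∀ z : ↥p × ↥q, e (F z) = V.ρ g (e z) := by
    rintro ⟨a, b⟩
    have h1 : ∀ (z : ↥p × ↥q), e z = (z.1 : V) + (z.2 : V) := by
      intro z
      rw [he]
      simp [Submodule.coe_prodEquivOfIsCompl']
    rw [h1, h1]
    show (V.ρ g a : V) + (V.ρ g b : V) = V.ρ g ((a : V) + (b : V))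
    rw [map_add]
  have key2 : e.conj F = V.ρ g := by
    apply LinearMap.ext; intro x
    rw [LinearEquiv.conj_apply]
    calc e (F (e.symm x)) = V.ρ g (e (e.symm x)) := key _
    _ = V.ρ g x := by rw [e.apply_symm_apply]
  show LinearMap.trace ℂ _ (V.ρ g) = _
  rw [← key2, LinearMap.trace_conj']
  rw [hF, LinearMap.trace_prodMap']
  rfl

lemma char_zero_of_finrank_zero (V : FDRep ℂ H) (h : finrank ℂ V = 0) (g : H) :
    V.character g = 0 := by
  have hsub : Subsingleton (V : Type) := finrank_zero_iff.mp h
  have : V.ρ g = 0 := by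
    apply LinearMap.ext; intro x
    exact @Subsingleton.elim _ hsub _ _
  show LinearMap.trace ℂ _ (V.ρ g) = 0
  rw [this, map_zero]

lemma finrank_subrep (V : FDRep ℂ H) (p : Submodule ℂ V) (hp : IsInvt V p) :
    finrank ℂ (subrep V p hp : Type) = finrank ℂ p := rfl

/-- decomposition of characters into simple characters -/
lemma char_decomp (V : FDRep ℂ H) :
    ∃ (n : ℕ) (S : Fin n → FDRep ℂ H), (∀ i, Simple (S i)) ∧
      ∀ g, V.character g = ∑ i, (S i).character g := by
  suffices h : ∀ (N : ℕ) (V : FDRep ℂ H), finrank ℂ V = N →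
      ∃ (n : ℕ) (S : Fin n → FDRep ℂ H), (∀ i, Simple (S i)) ∧
        ∀ g, V.character g = ∑ i, (S i).character g by
    exact h _ V rfl
  intro N
  induction N using Nat.strong_induction_on with
  | _ N ih =>
  intro V hV
  rcases Nat.eq_zero_or_pos N with h0 | hpos
  · refine ⟨0, Fin.elim0, fun i => i.elim0, fun g => ?_⟩
    rw [char_zero_of_finrank_zero V (h0 ▸ hV) g]
    simp
  -- pick an invariant submodule of minimal positive dimension
  have hVne : finrank ℂ V ≠ 0 := by omega
  set SS : Set ℕ := {m | ∃ p : Submodule ℂ V, IsInvt V p ∧ p ≠ ⊥ ∧ finrank ℂ p = m} with hSS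
  have hSne : SS.Nonempty := by
    refine ⟨finrank ℂ (⊤ : Submodule ℂ V), ⊤, fun g x _ => trivial, ?_, rfl⟩
    intro hbot
    apply hVne
    rw [← finrank_top ℂ (V : Type), hbot, finrank_bot]
  obtain ⟨p, hpinvt, hpne, hpm⟩ : ∃ p : Submodule ℂ V, IsInvt V p ∧ p ≠ ⊥ ∧
      finrank ℂ p = sInf SS := Nat.sInf_mem hSne
  have hmin : ∀ q : Submodule ℂ V, IsInvt V q → q ≠ ⊥ → finrank ℂ p ≤ finrank ℂ q := by
    intro q hq hqne
    rw [hpm]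
    exact Nat.sInf_le ⟨q, hq, hqne, rfl⟩
  have hpdim : finrank ℂ p ≠ 0 := by
    intro h
    exact hpne (Submodule.finrank_eq_zero.mp h)
  -- subrep p is simple
  haveI hsimple : Simple (subrep V p hpinvt) := by
    apply simple_of_irred
    · rw [finrank_subrep]; exact hpdim
    · intro r hr
      by_cases hrbot : r = ⊥
      · exact Or.inl hrbot
      right
      set inc := (subrepIncl V p hpinvt).hom.hom.hom with hinc
      have hinj : Function.Injective inc := by
        intro a b hab
        exact Subtype.ext hab
      have hrange_inc : LinearMap.range inc = p := by
        apply le_antisymm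
        · rintro x ⟨y, rfl⟩
          exact y.2
        · intro x hx
          exact ⟨(⟨x, hx⟩ : ↥p), rfl⟩
      set r' : Submodule ℂ V := r.map inc with hr'
      have hr'invt : IsInvt V r' := map_invt _ r hr
      have hr'ne : r' ≠ ⊥ := by
        intro hb
        apply hrbot
        rw [Submodule.eq_bot_iff]
        intro y hy
        have hm : inc y ∈ r' := ⟨y, hy, rfl⟩
        rw [hb, Submodule.mem_bot] at hm
        exact hinj (by rw [hm]; exact (map_zero inc).symm)
      have hle : r' ≤ p := by
        rintro x ⟨y, -, rfl⟩
        have hm := LinearMap.mem_range_self inc y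
        rwa [hrange_inc] at hm
      have heq := Submodule.eq_of_le_of_finrank_le hle (hmin r' hr'invt hr'ne)
      have hfin : r.map inc = (⊤ : Submodule ℂ _).map inc := by
        rw [Submodule.map_top, hrange_inc]
        exact heq
      exact Submodule.map_injective_of_injective hinj hfin
  obtain ⟨q, hqinvt, hcompl⟩ := exists_invt_compl V p hpinvt
  have hdim : finrank ℂ p + finrank ℂ q = N := by
    rw [← hV]
    rw [← Submodule.finrank_add_eq_of_isCompl hcompl]
  have hqlt : finrank ℂ q < N := by omega
  obtain ⟨n, S, hS, hchar⟩ := ih (finrank ℂ q) hqlt (subrep V q hqinvt) rfl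
  refine ⟨n + 1, Fin.cons (subrep V p hpinvt) S, ?_, ?_⟩
  · intro i
    refine Fin.cases ?_ ?_ i
    · exact hsimple
    · exact hS
  · intro g
    rw [Fin.sum_univ_succ]
    simp only [Fin.cons_zero, Fin.cons_succ]
    rw [char_add_of_isCompl V hpinvt hqinvt hcompl g, hchar g]


/-- If W is generated by images of a simple rep φ, its character is a multiple of φ's. -/
lemma char_isotypic (φ : FDRep ℂ H) [Simple φ] :
    ∀ (W : FDRep ℂ H), (⨆ f : φ ⟶ W, LinearMap.range f.hom.hom.hom) = ⊤ →
      ∃ m : ℕ, ∀ g, W.character g = m * φ.character g := by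
  suffices h : ∀ (N : ℕ) (W : FDRep ℂ H), finrank ℂ W = N →
      (⨆ f : φ ⟶ W, LinearMap.range f.hom.hom.hom) = ⊤ →
      ∃ m : ℕ, ∀ g, W.character g = m * φ.character g by
    intro W; exact h _ W rfl
  intro N
  induction N using Nat.strong_induction_on with
  | _ N ih =>
  intro W hW hsup
  rcases Nat.eq_zero_or_pos N with h0 | hpos
  · exact ⟨0, fun g => by rw [char_zero_of_finrank_zero W (h0 ▸ hW) g]; simp⟩
  -- there is a nonzero hom f : φ ⟶ W
  have hex : ∃ f : φ ⟶ W, f.hom.hom.hom ≠ 0 := by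
    by_contra hno
    push_neg at hno
    have : (⨆ f : φ ⟶ W, LinearMap.range f.hom.hom.hom) = ⊥ := by
      rw [eq_bot_iff]
      refine iSup_le fun f => ?_
      rw [hno f, LinearMap.range_zero]
    rw [hsup] at this
    have h1 : finrank ℂ W = 0 := by
      have hsub : Subsingleton (W : Type) := by
        constructor
        intro a b
        have ha : a ∈ (⊤ : Submodule ℂ W) := trivial
        have hb : b ∈ (⊤ : Submodule ℂ W) := trivial
        rw [this, Submodule.mem_bot] at ha hb
        rw [ha, hb]
      exact finrank_zero_iff.mpr hsub
    omega
  obtain ⟨f, hf⟩ := hex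
  have hfne : f ≠ 0 := (hom_ne_zero_iff f).mpr hf
  set p := LinearMap.range f.hom.hom.hom with hp
  have hpinvt : IsInvt W p := range_invt f
  -- subrep p ≅ φ
  have hker : LinearMap.ker f.hom.hom.hom = ⊥ := ker_eq_bot_of_ne_zero f hfne
  have hchar_p : ∀ g, (subrep W p hpinvt).character g = φ.character g := by
    have hbij : Function.Bijective (LinearMap.rangeRestrict f.hom.hom.hom) := by
      constructor
      · rw [← LinearMap.ker_eq_bot, LinearMap.ker_rangeRestrict, hker]
      · exact LinearMap.surjective_rangeRestrict f.hom.hom.hom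
    have hcomm2 : ∀ (g : H) (x : φ), LinearMap.rangeRestrict f.hom.hom.hom (φ.ρ g x) =
        (subrep W p hpinvt).ρ g (LinearMap.rangeRestrict f.hom.hom.hom x) := by
      intro g x
      apply Subtype.ext
      show f.hom.hom.hom (φ.ρ g x) = W.ρ g (f.hom.hom.hom x)
      exact hom_comm f g x
    let f' : φ ⟶ subrep W p hpinvt :=
      ⟨FGModuleCat.ofHom (LinearMap.rangeRestrict f.hom.hom.hom), fun g => by ext x; exact hcomm2 g x⟩
    haveI : IsIso f' := isIso_of_bijective f' hbij
    exact fun g => (FDRep.char_iso (asIso f')).symm ▸ rfl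
  -- complement
  obtain ⟨q, hqinvt, hcompl⟩ := exists_invt_compl W p hpinvt
  have hpdim : finrank ℂ ↥p ≠ 0 := by
    intro h
    rw [Submodule.finrank_eq_zero] at h
    exact hf (LinearMap.range_eq_bot.mp h)
  have hdim : finrank ℂ ↥p + finrank ℂ ↥q = N :=
    (Submodule.finrank_add_eq_of_isCompl hcompl).trans hW
  have hqlt : finrank ℂ ↥q < N := by omega
  -- projection onto q
  set prq : (W : Type) →ₗ[ℂ] ↥q := Submodule.linearProjOfIsCompl q p hcompl.symm with hprq
  have hprq_p : ∀ (x : (W : Type)) (hx : x ∈ p), prq x = 0 := fun x hx =>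
    Submodule.linearProjOfIsCompl_apply_right hcompl.symm ⟨x, hx⟩
  have hprq_q : ∀ (x : (W : Type)) (hx : x ∈ q), prq x = ⟨x, hx⟩ := fun x hx =>
    Submodule.linearProjOfIsCompl_apply_left hcompl.symm ⟨x, hx⟩
  have hequi : ∀ (g : H) (x : W), prq (W.ρ g x) = (subrep W q hqinvt).ρ g (prq x) := by
    intro g x
    have hx : x ∈ p ⊔ q := by rw [hcompl.sup_eq_top]; trivial
    obtain ⟨a, ha, b, hb, rfl⟩ := Submodule.mem_sup.mp hx
    rw [map_add, map_add, map_add]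
    have h1 : prq (W.ρ g a) = 0 := hprq_p _ (hpinvt g a ha)
    have h2 : prq a = 0 := hprq_p a ha
    have h3 : prq (W.ρ g b) = ⟨W.ρ g b, hqinvt g b hb⟩ := hprq_q _ (hqinvt g b hb)
    have h4 : prq b = ⟨b, hb⟩ := hprq_q b hb
    rw [h1, h2, h3, h4]
    simp only [zero_add, map_add]
    exact (subrep_ρ_apply W q hqinvt g ⟨b, hb⟩).symm
  set π : W ⟶ subrep W q hqinvt := ⟨FGModuleCat.ofHom prq, fun g => by ext x; exact hequi g x⟩ with hπ
  -- the image condition for subrep q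
  have hsup' : (⨆ f' : φ ⟶ subrep W q hqinvt, LinearMap.range f'.hom.hom.hom) = ⊤ := by
    apply le_antisymm le_top
    intro y _
    have hsurj : Submodule.map prq (⊤ : Submodule ℂ W) = ⊤ := by
      rw [Submodule.map_top]
      rw [LinearMap.range_eq_top]
      intro z
      exact ⟨(z : W), (hprq_q _ z.2).trans (Subtype.ext rfl)⟩
    have hchain : (⊤ : Submodule ℂ ↥q) = ⨆ f0 : φ ⟶ W, Submodule.map prq (LinearMap.range f0.hom.hom.hom) := by
      rw [← Submodule.map_iSup, hsup, hsurj]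
    have hy : y ∈ ⨆ f0 : φ ⟶ W, Submodule.map prq (LinearMap.range f0.hom.hom.hom) := by
      rw [← hchain]; trivial
    refine (iSup_le_iff.mpr ?_ : (⨆ f0 : φ ⟶ W, Submodule.map prq (LinearMap.range f0.hom.hom.hom)) ≤ _) hy
    intro f0
    have hmr : Submodule.map prq (LinearMap.range f0.hom.hom.hom) = LinearMap.range ((f0 ≫ π).hom.hom.hom) := by
      rw [Action.comp_hom]
      show _ = LinearMap.range (prq ∘ₗ f0.hom.hom.hom)
      rw [LinearMap.range_comp]
    rw [hmr]
    exact le_iSup (fun f' : φ ⟶ subrep W q hqinvt => LinearMap.range f'.hom.hom.hom) (f0 ≫ π)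
  obtain ⟨m, hm⟩ := ih (finrank ℂ ↥q) hqlt (subrep W q hqinvt) rfl hsup'
  refine ⟨m + 1, fun g => ?_⟩
  rw [char_add_of_isCompl W hpinvt hqinvt hcompl g, hchar_p g, hm g]
  push_cast
  ring

lemma exists_ne_zero_hom {A B : FDRep ℂ H} (h : finrank ℂ (A ⟶ B) ≠ 0) :
    ∃ f : A ⟶ B, f ≠ 0 := by
  have : Nontrivial (A ⟶ B) := Module.nontrivial_of_finrank_pos (R := ℂ) (Nat.pos_of_ne_zero h)
  obtain ⟨f, g, hfg⟩ := this
  rcases eq_or_ne f 0 with rfl | hf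
  · exact ⟨g, Ne.symm hfg⟩
  · exact ⟨f, hf⟩

lemma nonempty_iso_of_homDim {A B : FDRep ℂ H} [Simple A] [Simple B]
    (h : finrank ℂ (A ⟶ B) ≠ 0) : Nonempty (A ≅ B) := by
  obtain ⟨f, hf⟩ := exists_ne_zero_hom h
  haveI := isIso_of_hom_simple hf
  exact ⟨asIso f⟩

lemma homDim_self (A : FDRep ℂ H) [Simple A] : finrank ℂ (A ⟶ A) = 1 := by
  classical
  rw [FDRep.finrank_hom_simple_simple A A, if_pos ⟨Iso.refl A⟩]

/-- representation obtained by composing with a group hom -/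
def compRep {H' : Type} [Group H'] (V : FDRep ℂ H) (c : H' →* H) : FDRep ℂ H' :=
  FDRep.of (V.ρ.comp c)

lemma compRep_char {H' : Type} [Group H'] (V : FDRep ℂ H) (c : H' →* H) (h : H') :
    (compRep V c).character h = V.character (c h) := rfl

lemma compRep_simple {H' : Type} [Group H'] [Fintype H'] (V : FDRep ℂ H) [Simple V]
    (c : H' →* H) (hc : Function.Surjective c) : Simple (compRep V c) := by
  apply simple_of_irred
  · show finrank ℂ (V : Type) ≠ 0
    exact (finrank_pos_of_simple V).ne'
  · intro p hp
    refine irred_of_simple V p ?_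
    intro g x hx
    obtain ⟨h', rfl⟩ := hc g
    exact hp h' x hx

/-- twisted representation by a linear character -/
def twistρ (V : FDRep ℂ H) (lam : H →* ℂˣ) : Representation ℂ H V where
  toFun g := (lam g : ℂ) • V.ρ g
  map_one' := by simp
  map_mul' g h := by
    apply LinearMap.ext; intro x
    show ((lam (g * h) : ℂ)) • V.ρ (g * h) x = ((lam g : ℂ) • V.ρ g) (((lam h : ℂ) • V.ρ h) x)
    rw [map_mul lam, Units.val_mul, ρ_mul_apply]
    show ((lam g : ℂ) * (lam h : ℂ)) • V.ρ g (V.ρ h x) =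
      (lam g : ℂ) • V.ρ g ((lam h : ℂ) • V.ρ h x)
    rw [map_smul, smul_smul]

def twist (V : FDRep ℂ H) (lam : H →* ℂˣ) : FDRep ℂ H := FDRep.of (twistρ V lam)

lemma twist_char (V : FDRep ℂ H) (lam : H →* ℂˣ) (g : H) :
    (twist V lam).character g = (lam g : ℂ) * V.character g := by
  show LinearMap.trace ℂ _ ((lam g : ℂ) • V.ρ g) = (lam g : ℂ) * LinearMap.trace ℂ _ (V.ρ g)
  rw [map_smul, smul_eq_mul]

lemma twist_simple (V : FDRep ℂ H) [Simple V] (lam : H →* ℂˣ) : Simple (twist V lam) := by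
  apply simple_of_irred
  · show finrank ℂ (V : Type) ≠ 0
    exact (finrank_pos_of_simple V).ne'
  · intro p hp
    refine irred_of_simple V p ?_
    intro g x hx
    have := hp g x hx
    have h2 : V.ρ g x = ((lam g : ℂ)⁻¹ • (twistρ V lam) g) x := by
      show V.ρ g x = (lam g : ℂ)⁻¹ • ((lam g : ℂ) • V.ρ g x)
      rw [smul_smul, inv_mul_cancel₀ (Units.ne_zero (lam g)), one_smul]
    rw [h2]
    exact Submodule.smul_mem p _ this

/-- a simple rep whose image commutes has a linear character -/
lemma simple_commutative_char (S : FDRep ℂ H) [Simple S]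
    (hcomm : ∀ g h : H, S.ρ g ∘ₗ S.ρ h = S.ρ h ∘ₗ S.ρ g) :
    ∃ lam : H →* ℂˣ, ∀ g, S.character g = lam g := by
  classical
  -- every ρ g is an endomorphism in the category
  have hid : (𝟙 S : S ⟶ S) ≠ 0 := id_nonzero S
  have hrank : finrank ℂ (S ⟶ S) = 1 := homDim_self S
  have hscal : ∀ g : H, ∃ c : ℂ, S.ρ g = c • LinearMap.id := by
    intro g
    set Fg : S ⟶ S := ⟨FGModuleCat.ofHom (S.ρ g), fun h => by
      ext x
      exact congrFun (congrArg DFunLike.coe (hcomm g h)) x⟩ with hFg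
    have hspan : Submodule.span ℂ {(𝟙 S : S ⟶ S)} = ⊤ :=
      (finrank_eq_one_iff_of_nonzero (𝟙 S : S ⟶ S) hid).mp hrank
    have hFg_mem : Fg ∈ Submodule.span ℂ {(𝟙 S : S ⟶ S)} := by rw [hspan]; trivial
    obtain ⟨c, hc⟩ := Submodule.mem_span_singleton.mp hFg_mem
    refine ⟨c, ?_⟩
    apply LinearMap.ext; intro x
    have := hom_congr hc.symm x
    show (Fg.hom.hom.hom : S →ₗ[ℂ] S) x = _
    rw [this]
    show (c • (𝟙 S : S ⟶ S)).hom.hom.hom x = c • x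
    rw [Action.smul_hom]
    rfl
  -- S is one-dimensional
  have hnontriv : Nontrivial (S : Type) :=
    Module.nontrivial_of_finrank_pos (R := ℂ) (finrank_pos_of_simple S)
  obtain ⟨x, hx⟩ := exists_ne (0 : (S : Type))
  have hspan_invt : IsInvt S (Submodule.span ℂ {x}) := by
    intro g y hy
    obtain ⟨c, hc⟩ := hscal g
    rw [hc]
    exact Submodule.smul_mem _ c hy
  have hspan_top : Submodule.span ℂ {x} = ⊤ := by
    rcases irred_of_simple S _ hspan_invt with h | h
    · exfalso
      exact hx (by
        have : x ∈ Submodule.span ℂ {x} := Submodule.mem_span_singleton_self x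
        rw [h, Submodule.mem_bot] at this
        exact this)
    · exact h
  have hd1 : finrank ℂ (S : Type) = 1 := by
    rw [← finrank_top ℂ (S : Type), ← hspan_top]
    exact finrank_span_singleton hx
  -- extract the scalars
  have hc_unique : ∀ (a b : ℂ), a • x = b • x → a = b := by
    intro a b hab
    by_contra hne
    have : (a - b) • x = 0 := by rw [sub_smul, hab, sub_self]
    rcases smul_eq_zero.mp this with h | h
    · exact hne (sub_eq_zero.mp h)
    · exact hx h
  choose c hc using hscal
  have hc_mul : ∀ g h : H, c (g * h) = c g * c h := by
    intro g h
    apply hc_unique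
    have h1 : S.ρ (g * h) x = c (g * h) • x := by rw [hc]; rfl
    have h2 : S.ρ (g * h) x = (c g * c h) • x := by
      rw [ρ_mul_apply, hc h, hc g]
      show c g • (c h • x) = _
      rw [smul_smul]
    rw [← h1, h2]
  have hc_one : c 1 = 1 := by
    apply hc_unique
    have h1 : S.ρ 1 x = c 1 • x := by rw [hc]; rfl
    rw [← h1, map_one]
    show x = (1 : ℂ) • x
    rw [one_smul]
  have hc_ne : ∀ g, c g ≠ 0 := by
    intro g hg
    have : c g * c g⁻¹ = 1 := by rw [← hc_mul, mul_inv_cancel, hc_one]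
    rw [hg, zero_mul] at this
    exact one_ne_zero this.symm
  refine ⟨{ toFun := fun g => Units.mk0 (c g) (hc_ne g),
            map_one' := by ext; exact hc_one,
            map_mul' := fun g h => by ext; exact hc_mul g h }, ?_⟩
  intro g
  show LinearMap.trace ℂ _ (S.ρ g) = c g
  rw [hc g, map_smul, LinearMap.trace_id, smul_eq_mul, hd1]
  norm_num

/-- the trivial rep -/
def trivRep : FDRep ℂ H := FDRep.of (Representation.trivial ℂ (G := H) (V := ℂ))

lemma trivRep_char (g : H) : (trivRep : FDRep ℂ H).character g = 1 := by
  show LinearMap.trace ℂ ℂ LinearMap.id = 1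
  rw [LinearMap.trace_id]
  norm_num

/-- the regular representation -/
def regRep : FDRep ℂ H := FDRep.of (Representation.ofMulAction ℂ H H)

lemma regRep_char_diag (g : H) :
    (regRep : FDRep ℂ H).character g =
      ∑ x : H, (if g * x = x then (1 : ℂ) else 0) := by
  classical
  set b : Basis H ℂ (MonoidAlgebra ℂ H) := MonoidAlgebra.basis H ℂ with hb
  show (LinearMap.trace ℂ (MonoidAlgebra ℂ H)) ((Representation.ofMulAction ℂ H H) g) = _
  rw [LinearMap.trace_eq_matrix_trace ℂ b, Matrix.trace]
  refine Finset.sum_congr rfl fun x _ => ?_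
  rw [Matrix.diag, LinearMap.toMatrix_apply]
  have hbx : b x = MonoidAlgebra.single x 1 := by rw [hb]; simp
  rw [hbx]
  rw [Representation.ofMulAction_single (k := ℂ) (G := H) (H := H) g x (1 : ℂ)]
  have hsm : g • x = g * x := rfl
  rw [hsm]
  have hrepr : (b.repr (MonoidAlgebra.single (g * x) 1)) x = (Finsupp.single (g * x) (1:ℂ)) x := by
    rw [hb]
    simp [MonoidAlgebra.basis]
  rw [hrepr, Finsupp.single_apply]

lemma regRep_char_one : (regRep : FDRep ℂ H).character 1 = (Fintype.card H : ℂ) := by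
  classical
  rw [regRep_char_diag]
  simp

lemma regRep_char_ne (g : H) (hg : g ≠ 1) : (regRep : FDRep ℂ H).character g = 0 := by
  classical
  rw [regRep_char_diag]
  refine Finset.sum_eq_zero fun x _ => ?_
  rw [if_neg]
  intro hgx
  exact hg (mul_right_cancel (b := x) (by rw [one_mul, hgx]))

section Main

variable {G : Type} [Group G] [Fintype G] {K L : Subgroup G}

/-- conjugation automorphism of a normal subgroup -/
def conjHom (A : Subgroup G) (hA : A.Normal) (g : G) : ↥A →* ↥A where
  toFun a := ⟨g⁻¹ * a * g, by simpa using hA.conj_mem (a : G) a.2 g⁻¹⟩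
  map_one' := by ext; simp
  map_mul' a b := by ext; simp [mul_assoc]

lemma conjHom_surjective (A : Subgroup G) (hA : A.Normal) (g : G) :
    Function.Surjective (conjHom A hA g) := by
  intro a
  refine ⟨⟨g * a * g⁻¹, by simpa using hA.conj_mem (a : G) a.2 g⟩, ?_⟩
  ext
  show g⁻¹ * (g * a * g⁻¹) * g = a
  group

lemma conjHom_apply (A : Subgroup G) (hA : A.Normal) (g : G) (a : ↥A) :
    ((conjHom A hA g a : ↥A) : G) = g⁻¹ * a * g := rfl

variable (hKn : K.Normal) (hLn : L.Normal) (hLK : L ≤ K)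

/-- Clifford's theorem for an invariant simple character -/
lemma clifford (φ : FDRep ℂ ↥L) [Simple φ]
    (hinv : ∀ (g : G) (l : ↥L),
      φ.character ⟨g * (l : G) * g⁻¹, hLn.conj_mem (l : G) l.2 g⟩ = φ.character l)
    (θ : FDRep ℂ ↥K) [Simple θ]
    (hθ : finrank ℂ (φ ⟶ compRep θ (Subgroup.inclusion hLK)) ≠ 0) :
    ∃ e : ℕ, 0 < e ∧
      ∀ l : ↥L, θ.character (Subgroup.inclusion hLK l) = e * φ.character l := by
  set ι := Subgroup.inclusion hLK with hι
  set W := compRep θ ι with hW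
  -- conjugated φ has the same character
  have hconj_char : ∀ (k : ↥K) (l : ↥L),
      φ.character (conjHom L hLn (k : G) l) = φ.character l := by
    intro k l
    have h1 : conjHom L hLn (k : G) l =
        ⟨(k : G)⁻¹ * (l : G) * ((k : G)⁻¹)⁻¹, hLn.conj_mem (l : G) l.2 (k : G)⁻¹⟩ := by
      ext
      show (k : G)⁻¹ * (l : G) * (k : G) = (k : G)⁻¹ * (l : G) * ((k : G)⁻¹)⁻¹
      rw [inv_inv]
    rw [h1, hinv]
  -- each conjugated rep is isomorphic to φ
  have hiso : ∀ k : ↥K, ∃ u : φ ⟶ compRep φ (conjHom L hLn (k : G)),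
      Function.Surjective u.hom.hom.hom := by
    intro k
    haveI hsimp : Simple (compRep φ (conjHom L hLn (k : G))) :=
      compRep_simple φ _ (conjHom_surjective L hLn (k : G))
    have hchar : ∀ l, (compRep φ (conjHom L hLn (k : G))).character l = φ.character l := by
      intro l
      rw [compRep_char]
      exact hconj_char k l
    have hd : (finrank ℂ (φ ⟶ compRep φ (conjHom L hLn (k : G))) : ℂ) = 1 := by
      rw [char_homDim']
      have : ∀ l : ↥L, (compRep φ (conjHom L hLn (k : G))).character l * φ.character l⁻¹ =
          φ.character l * φ.character l⁻¹ := fun l => by rw [hchar]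
      rw [Finset.sum_congr rfl fun l _ => this l]
      rw [← char_homDim' φ φ, homDim_self φ]
      norm_num
    have hd' : finrank ℂ (φ ⟶ compRep φ (conjHom L hLn (k : G))) ≠ 0 := by
      intro h; rw [h] at hd; norm_num at hd
    obtain ⟨u, hu⟩ := exists_ne_zero_hom hd'
    haveI := isIso_of_hom_simple hu
    refine ⟨u, ?_⟩
    obtain ⟨iv, hiv1, hiv2⟩ := (inferInstance : IsIso u).out
    intro y
    refine ⟨iv.hom.hom.hom y, ?_⟩
    have := hom_congr hiv2 y
    rwa [comp_apply', id_apply'] at this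
  -- the submodule generated by images of φ
  set P : Submodule ℂ (W : Type) := ⨆ f : φ ⟶ W, LinearMap.range f.hom.hom.hom with hP
  have hPinvt : IsInvt θ P := by
    intro k x hx
    have hmap : Submodule.map (θ.ρ k) P ≤ P := by
      rw [hP]
      refine le_trans (Submodule.map_iSup _ _).le ?_
      refine iSup_le fun f => ?_
      obtain ⟨u, hu⟩ := hiso k
      -- build the twisted hom f' : φ ⟶ W
      have hcomm' : ∀ l : ↥L, (k * ι (conjHom L hLn (k : G) l)) = ι l * k := by
        intro l
        ext
        show (k : G) * ((k : G)⁻¹ * (l : G) * (k : G)) = (l : G) * (k : G)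
        group
      set f' : φ ⟶ W := ⟨FGModuleCat.ofHom ((θ.ρ k) ∘ₗ (f.hom.hom.hom ∘ₗ u.hom.hom.hom)), by
        intro l
        ext v
        show θ.ρ k (f.hom.hom.hom (u.hom.hom.hom (φ.ρ l v))) = W.ρ l (θ.ρ k (f.hom.hom.hom (u.hom.hom.hom v)))
        have s1 : u.hom.hom.hom (φ.ρ l v) = φ.ρ (conjHom L hLn (k : G) l) (u.hom.hom.hom v) := hom_comm u l v
        have s2 : f.hom.hom.hom (φ.ρ (conjHom L hLn (k : G) l) (u.hom.hom.hom v)) =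
            θ.ρ (ι (conjHom L hLn (k : G) l)) (f.hom.hom.hom (u.hom.hom.hom v)) := hom_comm f _ _
        rw [s1, s2]
        exact (ρ_mul_apply θ _ _ _).symm.trans ((congrArg (fun z => θ.ρ z (f.hom.hom.hom (u.hom.hom.hom v)))
          (hcomm' l)).trans (ρ_mul_apply θ _ _ _))⟩ with hf'
      refine (calc Submodule.map (θ.ρ k) (LinearMap.range f.hom.hom.hom)
          = LinearMap.range (θ.ρ k ∘ₗ f.hom.hom.hom) := (LinearMap.range_comp _ _).symm
        _ = LinearMap.range ((θ.ρ k ∘ₗ f.hom.hom.hom) ∘ₗ u.hom.hom.hom) :=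
            (LinearMap.range_comp_of_range_eq_top _ (LinearMap.range_eq_top.mpr hu)).symm
        ).trans_le (le_iSup (fun f0 : φ ⟶ W => LinearMap.range f0.hom.hom.hom) f')
    exact hmap ⟨x, hx, rfl⟩
  have hPne : P ≠ ⊥ := by
    obtain ⟨f, hf⟩ := exists_ne_zero_hom hθ
    intro hb
    have hr : LinearMap.range f.hom.hom.hom ≤ P := le_iSup (fun f0 : φ ⟶ W => LinearMap.range f0.hom.hom.hom) f
    rw [hb, le_bot_iff, LinearMap.range_eq_bot] at hr
    exact (hom_ne_zero_iff f).mp hf hr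
  have hPtop : P = ⊤ := by
    rcases irred_of_simple θ P hPinvt with h | h
    · exact absurd h hPne
    · exact h
  obtain ⟨m, hm⟩ := char_isotypic φ W hPtop
  have hm0 : m ≠ 0 := by
    intro h0
    have h1 := hm 1
    rw [h0] at h1
    norm_num at h1
    exact (finrank_pos_of_simple θ).ne' h1
  exact ⟨m, Nat.pos_of_ne_zero hm0, fun l => hm l⟩

include hLn in
lemma key (hab : ∀ a b : G, a ∈ K → b ∈ K → a * b * a⁻¹ * b⁻¹ ∈ L)
    (φ : FDRep ℂ ↥L) [Simple φ]
    (σ θ : FDRep ℂ ↥K) [Simple σ] [Simple θ] (a e : ℕ)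
    (hσc : ∀ l : ↥L, σ.character (Subgroup.inclusion hLK l) = a * φ.character l)
    (hθc : ∀ l : ↥L, θ.character (Subgroup.inclusion hLK l) = e * φ.character l) :
    ∃ (n : ℕ) (lam : Fin n → (↥K →* ℂˣ)),
      n = a * e ∧
      (∀ j, ∀ l : ↥L, lam j (Subgroup.inclusion hLK l) = 1) ∧
      (∀ j, ∀ k : ↥K, σ.character k = ((lam j k : ℂ))⁻¹ * θ.character k) ∧
      ((∀ j, lam j = 1) → n ≤ finrank ℂ (σ ⟶ θ)) := by
  set ι := Subgroup.inclusion hLK with hι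
  set X : FDRep ℂ ↥K := FDRep.of (Representation.dual σ.ρ) ⊗ θ with hX
  have hXchar : ∀ k : ↥K, X.character k = σ.character k⁻¹ * θ.character k := by
    intro k
    rw [hX, FDRep.char_tensor]
    show (FDRep.of (Representation.dual σ.ρ)).character k * θ.character k = _
    rw [FDRep.char_dual]
  set resX := compRep X ι with hresX
  set Ysub : Submodule ℂ (X : Type) := Representation.invariants (resX).ρ with hY
  have hmemY : ∀ x : (X : Type), x ∈ Ysub ↔ ∀ l : ↥L, X.ρ (ι l) x = x := by
    intro x
    rw [hY]
    exact Iff.rfl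
  -- dimension of Y
  have hφself : (Fintype.card ↥L : ℂ)⁻¹ * ∑ l : ↥L, φ.character l * φ.character l⁻¹ = 1 := by
    have h := char_homDim' φ φ
    rw [homDim_self φ] at h
    exact_mod_cast h.symm
  have hYdim : (finrank ℂ Ysub : ℂ) = (a : ℂ) * e := by
    have havg := FDRep.average_char_eq_finrank_invariants resX
    have h2 : ⅟(Fintype.card ↥L : ℂ) • ∑ l : ↥L, resX.character l = (a : ℂ) * e := by
      have hterm : ∀ l : ↥L, (resX).character l =
          ((a : ℂ) * e) * (φ.character l * φ.character l⁻¹) := by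
        intro l
        rw [hresX, compRep_char, hXchar]
        have h1 : (ι l)⁻¹ = ι l⁻¹ := by rw [← map_inv]
        rw [h1, hσc l⁻¹, hθc l]
        ring
      rw [Finset.sum_congr rfl fun l _ => hterm l]
      rw [← Finset.mul_sum, smul_eq_mul, invOf_eq_inv, mul_left_comm, hφself, mul_one]
    rw [smul_eq_mul, invOf_eq_inv, ← Nat.card_eq_fintype_card] at h2
    exact (havg.symm.trans h2 : _)
  -- Y is K-invariant
  have hYinvt : IsInvt X Ysub := by
    intro k x hx
    rw [hmemY] at hx ⊢
    intro l
    have hcomm' : ι l * k = k * ι (conjHom L hLn (k : G) l) := by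
      ext
      show (l : G) * (k : G) = (k : G) * ((k : G)⁻¹ * (l : G) * (k : G))
      group
    rw [← ρ_mul_apply, hcomm', ρ_mul_apply, hx]
  set Yrep := subrep X Ysub hYinvt with hYrep
  obtain ⟨n, S, hSsimple, hYchar⟩ := char_decomp Yrep
  haveI : ∀ j, Simple (S j) := hSsimple
  -- each constituent embeds into Yrep
  have hhomdim : ∀ j, finrank ℂ (S j ⟶ Yrep) ≠ 0 := by
    intro j
    have hc : (finrank ℂ (S j ⟶ Yrep) : ℂ) = ∑ i, (finrank ℂ (S j ⟶ S i) : ℂ) := by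
      rw [char_homDim']
      have : ∀ k : ↥K, Yrep.character k * (S j).character k⁻¹ =
          ∑ i, (S i).character k * (S j).character k⁻¹ := by
        intro k
        rw [hYchar k, Finset.sum_mul]
      rw [Finset.sum_congr rfl fun k _ => this k]
      rw [Finset.sum_comm, Finset.mul_sum]
      refine Finset.sum_congr rfl fun i _ => ?_
      rw [char_homDim']
    have hnat : finrank ℂ (S j ⟶ Yrep) = ∑ i, finrank ℂ (S j ⟶ S i) := by
      exact_mod_cast hc
    rw [hnat]
    intro hzero
    have hj : finrank ℂ (S j ⟶ S j) = 0 :=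
      (Finset.sum_eq_zero_iff.mp hzero) j (Finset.mem_univ j)
    rw [homDim_self (S j)] at hj
    exact one_ne_zero hj
  -- nonzero hom, injective
  have hembed : ∀ j, ∃ f : S j ⟶ Yrep, f ≠ 0 ∧ Function.Injective f.hom.hom.hom := by
    intro j
    obtain ⟨f, hf⟩ := exists_ne_zero_hom (hhomdim j)
    exact ⟨f, hf, LinearMap.ker_eq_bot.mp (ker_eq_bot_of_ne_zero f hf)⟩
  -- L acts trivially on each constituent
  have htrivL : ∀ j, ∀ l : ↥L, (S j).ρ (ι l) = 1 := by
    intro j l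
    obtain ⟨f, hf, hinj⟩ := hembed j
    apply LinearMap.ext
    intro x
    apply hinj
    rw [hom_comm f (ι l) x]
    have : Yrep.ρ (ι l) (f.hom.hom.hom x) = f.hom.hom.hom x := by
      apply Subtype.ext
      exact ((hmemY _).mp (f.hom.hom.hom x).2) l
    rw [this]
    rfl
  -- the constituents have commuting action
  have hcommS : ∀ j, ∀ k k' : ↥K, (S j).ρ k ∘ₗ (S j).ρ k' = (S j).ρ k' ∘ₗ (S j).ρ k := by
    intro j k k'
    have hc : (k * k' * k⁻¹ * k'⁻¹ : ↥K) =
        ι ⟨((k * k' * k⁻¹ * k'⁻¹ : ↥K) : G), hab k k' k.2 k'.2⟩ := by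
      ext; rfl
    apply LinearMap.ext
    intro x
    show (S j).ρ k ((S j).ρ k' x) = (S j).ρ k' ((S j).ρ k x)
    have h1 : (k * k' : ↥K) = (k * k' * k⁻¹ * k'⁻¹) * (k' * k) := by group
    rw [← ρ_mul_apply, ← ρ_mul_apply, h1, ρ_mul_apply, hc, htrivL j]
    rfl
  -- extract linear characters
  have hlam : ∀ j, ∃ lam : ↥K →* ℂˣ, ∀ k, (S j).character k = lam k :=
    fun j => simple_commutative_char (S j) (hcommS j)
  choose lam hlamchar using hlam
  refine ⟨n, lam, ?_, ?_, ?_, ?_⟩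
  · -- n = a * e
    have h1 : Yrep.character 1 = (n : ℂ) := by
      rw [hYchar 1]
      have hone : ∀ j, (S j).character 1 = 1 := by
        intro j
        rw [hlamchar j 1, map_one, Units.val_one]
      rw [Finset.sum_congr rfl fun j _ => hone j]
      simp
    have h2 : Yrep.character 1 = (finrank ℂ Ysub : ℂ) := FDRep.char_one Yrep
    have h3 : (n : ℂ) = (a : ℂ) * e := h1.symm.trans (h2.trans hYdim)
    exact_mod_cast h3
  · intro j l
    have hρ : (S j).ρ (ι l) = (S j).ρ 1 := by
      rw [map_one]; exact htrivL j l
    have h1 : (S j).character (ι l) = (S j).character 1 := by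
      show LinearMap.trace ℂ _ ((S j).ρ (ι l)) = LinearMap.trace ℂ _ ((S j).ρ 1)
      rw [hρ]
    rw [hlamchar, hlamchar, map_one, Units.val_one] at h1
    refine Units.ext ?_
    rw [Units.val_one]
    exact h1
  · intro j
    have hfx : finrank ℂ (S j ⟶ X) ≠ 0 := by
      obtain ⟨f, hf, hinj⟩ := hembed j
      intro h0
      have hsub : Subsingleton (S j ⟶ X) := finrank_zero_iff.mp h0
      have hz : f ≫ subrepIncl X Ysub hYinvt = 0 := Subsingleton.elim _ _
      apply (hom_ne_zero_iff f).mp hf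
      apply LinearMap.ext; intro x
      have hx := hom_congr hz x
      rw [comp_apply', zero_apply'] at hx
      have hfx0 : f.hom.hom.hom x = 0 := Subtype.ext (hx.trans (ZeroMemClass.coe_zero Ysub).symm)
      exact hfx0
    set μ : ↥K →* ℂˣ := (lam j)⁻¹ with hμ
    have heq : (finrank ℂ (σ ⟶ twist θ μ) : ℂ) = (finrank ℂ (S j ⟶ X) : ℂ) := by
      rw [char_homDim', char_homDim']
      congr 1
      refine Finset.sum_congr rfl fun k _ => ?_
      rw [twist_char, hXchar, hlamchar j]
      have h1 : ((μ k : ℂˣ) : ℂ) = ((lam j k⁻¹ : ℂˣ) : ℂ) := by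
        rw [hμ, MonoidHom.inv_apply, map_inv]
      rw [h1]; ring
    have hne : finrank ℂ (σ ⟶ twist θ μ) ≠ 0 := by
      intro h0; rw [h0] at heq
      exact hfx (by exact_mod_cast heq.symm)
    haveI := twist_simple θ μ
    obtain ⟨iso⟩ := nonempty_iso_of_homDim hne
    have hchar := FDRep.char_iso iso
    intro k
    have hck := congrFun hchar k
    rw [twist_char] at hck
    rw [hck, hμ, MonoidHom.inv_apply, Units.val_inv_eq_inv_val]
  · intro hall
    have hSone : ∀ j k, (S j).character k = 1 := by
      intro j k
      rw [hlamchar j k, hall j, MonoidHom.one_apply, Units.val_one]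
    have hn1 : (finrank ℂ (trivRep ⟶ Yrep) : ℂ) = n := by
      rw [char_homDim']
      have hterm : ∀ k : ↥K, Yrep.character k * (trivRep : FDRep ℂ ↥K).character k⁻¹
          = (n : ℂ) := by
        intro k
        rw [hYchar k, trivRep_char, Finset.sum_congr rfl fun j _ => hSone j k]
        simp
      rw [Finset.sum_congr rfl fun k _ => hterm k, Finset.sum_const, Finset.card_univ]
      rw [nsmul_eq_mul, ← mul_assoc, inv_mul_cancel₀, one_mul]
      exact Nat.cast_ne_zero.mpr Fintype.card_ne_zero
    have hn2 : (finrank ℂ (trivRep ⟶ X) : ℂ) = (finrank ℂ (σ ⟶ θ) : ℂ) := by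
      rw [char_homDim', char_homDim']
      congr 1
      refine Finset.sum_congr rfl fun k _ => ?_
      rw [hXchar, trivRep_char]
      ring
    have hmono : finrank ℂ (trivRep ⟶ Yrep) ≤ finrank ℂ (trivRep ⟶ X) := by
      set F : (trivRep ⟶ Yrep) →ₗ[ℂ] (trivRep ⟶ X) := {
        toFun := fun f => f ≫ subrepIncl X Ysub hYinvt
        map_add' := fun f g => Preadditive.add_comp _ _ _ f g _
        map_smul' := fun c f => Linear.smul_comp _ _ _ c f _ } with hF
      apply LinearMap.finrank_le_finrank_of_injective (f := F)
      intro f g hfg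
      have h2 : f ≫ subrepIncl X Ysub hYinvt = g ≫ subrepIncl X Ysub hYinvt := hfg
      apply Action.Hom.ext
      apply FGModuleCat.hom_ext
      apply LinearMap.ext; intro x
      have hx := hom_congr h2 x
      rw [comp_apply', comp_apply'] at hx
      exact Subtype.ext hx
    have hno : n = finrank ℂ (trivRep ⟶ Yrep) := by exact_mod_cast hn1.symm
    have hfe : finrank ℂ (trivRep ⟶ X) = finrank ℂ (σ ⟶ θ) := by exact_mod_cast hn2
    omega

lemma exists_theta (φ : FDRep ℂ ↥L) [Simple φ] :
    ∃ θ : FDRep ℂ ↥K, Simple θ ∧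
      finrank ℂ (φ ⟶ compRep θ (Subgroup.inclusion hLK)) ≠ 0 := by
  set ι := Subgroup.inclusion hLK with hι
  obtain ⟨n, S, hSsimp, hchar⟩ := char_decomp (regRep : FDRep ℂ ↥K)
  haveI := hSsimp
  have hsum : ∑ i, (finrank ℂ (φ ⟶ compRep (S i) ι) : ℂ) =
      (Fintype.card ↥L : ℂ)⁻¹ * ((Fintype.card ↥K : ℂ) * (finrank ℂ (φ : Type) : ℂ)) := by
    have h1 : ∀ i, (finrank ℂ (φ ⟶ compRep (S i) ι) : ℂ) =
        (Fintype.card ↥L : ℂ)⁻¹ * ∑ l : ↥L, (S i).character (ι l) * φ.character l⁻¹ := by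
      intro i
      rw [char_homDim']
      rfl
    rw [Finset.sum_congr rfl fun i _ => h1 i]
    rw [← Finset.mul_sum, Finset.sum_comm]
    congr 1
    have h2 : ∀ l : ↥L, ∑ i, (S i).character (ι l) * φ.character l⁻¹ =
        (regRep : FDRep ℂ ↥K).character (ι l) * φ.character l⁻¹ := by
      intro l
      rw [← Finset.sum_mul, ← hchar (ι l)]
    rw [Finset.sum_congr rfl fun l _ => h2 l]
    rw [Finset.sum_eq_single (1 : ↥L)]
    · rw [map_one, regRep_char_one, inv_one, FDRep.char_one]
    · intro l _ hl
      rw [regRep_char_ne (ι l) (fun h => hl (by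
        have : ((ι l : ↥K) : G) = ((1 : ↥K) : G) := congrArg _ h
        exact Subtype.ext this)), zero_mul]
    · intro h
      exact absurd (Finset.mem_univ _) h
  have hrhs_ne : (Fintype.card ↥L : ℂ)⁻¹ *
      ((Fintype.card ↥K : ℂ) * (finrank ℂ (φ : Type) : ℂ)) ≠ 0 := by
    apply mul_ne_zero
    · exact inv_ne_zero (Nat.cast_ne_zero.mpr Fintype.card_ne_zero)
    apply mul_ne_zero
    · exact Nat.cast_ne_zero.mpr Fintype.card_ne_zero
    · exact Nat.cast_ne_zero.mpr (finrank_pos_of_simple φ).ne'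
  have hex : ∃ i, (finrank ℂ (φ ⟶ compRep (S i) ι) : ℂ) ≠ 0 := by
    by_contra hno
    push_neg at hno
    rw [Finset.sum_congr rfl fun i _ => hno i, Finset.sum_const, smul_zero] at hsum
    exact hrhs_ne hsum.symm
  obtain ⟨i, hi⟩ := hex
  exact ⟨S i, hSsimp i, fun h => hi (by rw [h]; norm_num)⟩

end Main

end

end Stmt14Aux

open CategoryTheory Module Stmt14Aux
open scoped Classical

/-- `X` is a minimal normal subgroup. -/
def IsMinNormal {G : Type*} [Group G] (X : Subgroup G) : Prop :=
  X ≠ ⊥ ∧ X.Normal ∧ ∀ Y : Subgroup G, Y.Normal → Y ≤ X → Y = ⊥ ∨ Y = X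

theorem stmt14 {G : Type} [Group G] [Finite G] (K L : Subgroup G)
    [hKn : K.Normal] [hLn : L.Normal] (hLK : L ≤ K)
    (hab : ∀ a b : G, a ∈ K → b ∈ K → a * b * a⁻¹ * b⁻¹ ∈ L)
    (hchief : IsMinNormal (K.map (QuotientGroup.mk' L)))
    (φ : FDRep ℂ L) [Simple φ]
    (hinv : ∀ (g : G) (l : L),
      φ.character ⟨g * (l : G) * g⁻¹, hLn.conj_mem (l : G) l.2 g⟩ = φ.character l) :
    (∃ θ : FDRep ℂ K, Simple θ ∧
      ∀ l : L, θ.character ⟨(l : G), hLK l.2⟩ = φ.character l) ∨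
    (∃ (θ : FDRep ℂ K) (e : ℕ), Simple θ ∧
      e ^ 2 * Nat.card L = Nat.card K ∧
      (∀ l : L, θ.character ⟨(l : G), hLK l.2⟩ = (e : ℂ) * φ.character l) ∧
      ∀ k : K, (k : G) ∉ L → θ.character k = 0) := by
  haveI : Fintype G := Fintype.ofFinite G
  set ι := Subgroup.inclusion hLK with hι
  obtain ⟨θ, hθsimple, hθne⟩ := exists_theta hLK φ
  haveI := hθsimple
  obtain ⟨e, hepos, heθ⟩ := clifford hLn hLK φ hinv θ hθne
  -- the subgroup N
  set T : (↥K →* ℂˣ) → Prop := fun lam =>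
    (∀ l : ↥L, lam (ι l) = 1) ∧
    (∀ k : ↥K, (lam k : ℂ) * θ.character k = θ.character k) with hT
  set N : Subgroup ↥K :=
    { carrier := {k : ↥K | ∀ lam, T lam → lam k = 1}
      one_mem' := fun lam _ => map_one lam
      mul_mem' := fun {x y} hx hy lam hl => by
        rw [map_mul, hx lam hl, hy lam hl, mul_one]
      inv_mem' := fun {x} hx lam hl => by
        rw [map_inv, hx lam hl, inv_one] } with hN
  set N' : Subgroup G := N.map K.subtype with hN'
  have hLN' : ∀ x : G, x ∈ L → x ∈ N' := by
    intro x hx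
    refine ⟨⟨x, hLK hx⟩, ?_, rfl⟩
    intro lam hl
    exact hl.1 ⟨x, hx⟩
  have hN'K : N' ≤ K := by
    rintro x ⟨k, _, rfl⟩
    exact k.2
  have hN'normal : N'.Normal := by
    constructor
    intro x hx g
    obtain ⟨k, hk, rfl⟩ := hx
    haveI hσsimple : Simple (compRep θ (conjHom K hKn g)) :=
      compRep_simple θ _ (conjHom_surjective K hKn g)
    set σ := compRep θ (conjHom K hKn g) with hσ
    have hσc : ∀ l : ↥L, σ.character (ι l) = e * φ.character l := by
      intro l
      rw [hσ, compRep_char]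
      have h1 : conjHom K hKn g (ι l) =
          ι ⟨g⁻¹ * (l : G) * (g⁻¹)⁻¹, hLn.conj_mem (l : G) l.2 g⁻¹⟩ := by
        ext
        show g⁻¹ * (l : G) * g = g⁻¹ * (l : G) * (g⁻¹)⁻¹
        rw [inv_inv]
      rw [h1, heθ, hinv g⁻¹ l]
    obtain ⟨nn, lam, hn_eq, hlamL, hlamrel, -⟩ := key hLn hLK hab φ σ θ e e hσc heθ
    have hnnpos : 0 < nn := by
      rw [hn_eq]
      exact Nat.mul_pos hepos hepos
    set j : Fin nn := ⟨0, hnnpos⟩ with hj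
    set μ : ↥K →* ℂˣ := (lam j)⁻¹ with hμ
    have hμrel : ∀ k' : ↥K, σ.character k' = (μ k' : ℂ) * θ.character k' := by
      intro k'
      rw [hlamrel j k', hμ, MonoidHom.inv_apply, Units.val_inv_eq_inv_val]
    refine ⟨⟨g * (k : G) * g⁻¹, hKn.conj_mem (k : G) k.2 g⟩, ?_, rfl⟩
    intro lam0 hl0
    set lam' : ↥K →* ℂˣ := lam0.comp (conjHom K hKn g⁻¹) with hlam'
    have hlam'T : T lam' := by
      constructor
      · intro l
        show lam0 (conjHom K hKn g⁻¹ (ι l)) = 1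
        have h2 : conjHom K hKn g⁻¹ (ι l) =
            ι ⟨g * (l : G) * g⁻¹, hLn.conj_mem (l : G) l.2 g⟩ := by
          ext
          show (g⁻¹)⁻¹ * (l : G) * g⁻¹ = g * (l : G) * g⁻¹
          rw [inv_inv]
        rw [h2]
        exact hl0.1 _
      · intro k'
        set x : ↥K := conjHom K hKn g⁻¹ k' with hx
        have hcx : conjHom K hKn g x = k' := by
          ext
          show g⁻¹ * ((g⁻¹)⁻¹ * (k' : G) * g⁻¹) * g = (k' : G)
          group
        have h1 : θ.character k' = (μ x : ℂ) * θ.character x := by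
          have h3 := hμrel x
          rw [hσ, compRep_char, hcx] at h3
          exact h3
        show (lam0 x : ℂ) * θ.character k' = θ.character k'
        rw [h1, ← mul_assoc, mul_comm ((lam0 x : ℂ)) _, mul_assoc, hl0.2 x]
    have hk' := hk lam' hlam'T
    have h4 : conjHom K hKn g⁻¹ k =
        (⟨g * (k : G) * g⁻¹, hKn.conj_mem (k : G) k.2 g⟩ : ↥K) := by
      ext
      show (g⁻¹)⁻¹ * (k : G) * g⁻¹ = g * (k : G) * g⁻¹
      rw [inv_inv]
    rw [hlam', MonoidHom.comp_apply, h4] at hk'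
    exact hk'
  -- chief factor dichotomy
  obtain ⟨-, -, hmin⟩ := hchief
  have hY1 : (N'.map (QuotientGroup.mk' L)).Normal :=
    Subgroup.Normal.map hN'normal _ (QuotientGroup.mk'_surjective L)
  have hY2 : N'.map (QuotientGroup.mk' L) ≤ K.map (QuotientGroup.mk' L) :=
    Subgroup.map_mono hN'K
  rcases hmin _ hY1 hY2 with hbot | htop
  · -- N' = L : fully ramified case
    right
    have hN'L : N' ≤ L := by
      intro x hx
      have h1 : QuotientGroup.mk' L x ∈ N'.map (QuotientGroup.mk' L) := ⟨x, hx, rfl⟩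
      rw [hbot, Subgroup.mem_bot] at h1
      exact (QuotientGroup.eq_one_iff x).mp h1
    have hvanish : ∀ k : ↥K, (k : G) ∉ L → θ.character k = 0 := by
      intro k hkL
      by_contra hne0
      apply hkL
      apply hN'L
      refine ⟨k, ?_, rfl⟩
      intro lam hl
      have h1 := hl.2 k
      have h2 : ((lam k : ℂ) - 1) * θ.character k = 0 := by
        rw [sub_mul, h1, one_mul, sub_self]
      rcases mul_eq_zero.mp h2 with h | h
      · refine Units.ext ?_
        rw [Units.val_one]
        exact sub_eq_zero.mp h
      · exact absurd h hne0
    -- now the cardinality identity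
    have hcLne : (Fintype.card ↥L : ℂ) ≠ 0 := Nat.cast_ne_zero.mpr Fintype.card_ne_zero
    have hcKne : (Fintype.card ↥K : ℂ) ≠ 0 := Nat.cast_ne_zero.mpr Fintype.card_ne_zero
    have h1' : (Fintype.card ↥L : ℂ)⁻¹ * ∑ l : ↥L, φ.character l * φ.character l⁻¹ = 1 := by
      have h := (char_homDim' φ φ).symm
      rw [homDim_self φ] at h
      exact_mod_cast h
    have hφsum : ∑ l : ↥L, φ.character l * φ.character l⁻¹ = (Fintype.card ↥L : ℂ) := by
      calc ∑ l : ↥L, φ.character l * φ.character l⁻¹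
          = (Fintype.card ↥L : ℂ) * ((Fintype.card ↥L : ℂ)⁻¹ *
            ∑ l : ↥L, φ.character l * φ.character l⁻¹) := by
            rw [← mul_assoc, mul_inv_cancel₀ hcLne, one_mul]
        _ = (Fintype.card ↥L : ℂ) := by rw [h1', mul_one]
    have h2' : (Fintype.card ↥K : ℂ)⁻¹ * ∑ k : ↥K, θ.character k * θ.character k⁻¹ = 1 := by
      have h := (char_homDim' θ θ).symm
      rw [homDim_self θ] at h
      exact_mod_cast h
    have hθsum : ∑ k : ↥K, θ.character k * θ.character k⁻¹ = (Fintype.card ↥K : ℂ) := by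
      calc ∑ k : ↥K, θ.character k * θ.character k⁻¹
          = (Fintype.card ↥K : ℂ) * ((Fintype.card ↥K : ℂ)⁻¹ *
            ∑ k : ↥K, θ.character k * θ.character k⁻¹) := by
            rw [← mul_assoc, mul_inv_cancel₀ hcKne, one_mul]
        _ = (Fintype.card ↥K : ℂ) := by rw [h2', mul_one]
    have hsplit : ∑ k : ↥K, θ.character k * θ.character k⁻¹ =
        ∑ l : ↥L, θ.character (ι l) * θ.character (ι l)⁻¹ := by
      rw [← Finset.sum_filter_add_sum_filter_not Finset.univ
        (fun k : ↥K => (k : G) ∈ L)]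
      have hz : (∑ k ∈ Finset.univ.filter (fun k : ↥K => ¬ ((k : G) ∈ L)),
          θ.character k * θ.character k⁻¹) = 0 := by
        refine Finset.sum_eq_zero fun k hk => ?_
        rw [hvanish k (Finset.mem_filter.mp hk).2, zero_mul]
      rw [hz, add_zero]
      refine Finset.sum_bij' (fun (k : ↥K) hk => (⟨(k : G),
        (Finset.mem_filter.mp hk).2⟩ : ↥L)) (fun (l : ↥L) _ => ι l) ?_ ?_ ?_ ?_ ?_
      · intro k hk
        exact Finset.mem_univ _
      · intro l _
        refine Finset.mem_filter.mpr ⟨Finset.mem_univ _, ?_⟩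
        exact l.2
      · intro k hk
        ext; rfl
      · intro l _
        ext; rfl
      · intro k hk
        rfl
    have hsum2 : ∑ l : ↥L, θ.character (ι l) * θ.character (ι l)⁻¹ =
        ((e : ℂ)^2) * (Fintype.card ↥L : ℂ) := by
      have hterm : ∀ l : ↥L, θ.character (ι l) * θ.character (ι l)⁻¹ =
          ((e : ℂ)^2) * (φ.character l * φ.character l⁻¹) := by
        intro l
        have h5 : (ι l)⁻¹ = ι l⁻¹ := by rw [← map_inv]
        rw [h5, heθ l, heθ l⁻¹]
        ring
      rw [Finset.sum_congr rfl fun l _ => hterm l, ← Finset.mul_sum, hφsum]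
    have hcard : (Fintype.card ↥K : ℂ) = ((e^2 : ℕ) : ℂ) * (Fintype.card ↥L : ℂ) := by
      rw [← hθsum, hsplit, hsum2]
      push_cast
      ring
    have hnat : e^2 * Fintype.card ↥L = Fintype.card ↥K := by exact_mod_cast hcard.symm
    refine ⟨θ, e, hθsimple, ?_, fun l => heθ l, hvanish⟩
    rw [Nat.card_eq_fintype_card, Nat.card_eq_fintype_card]
    exact hnat
  · -- N' = K : extension case
    left
    have hKN : ∀ k : ↥K, k ∈ N := by
      intro k
      have h1 : QuotientGroup.mk' L (k : G) ∈ N'.map (QuotientGroup.mk' L) := by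
        rw [htop]
        exact ⟨(k : G), k.2, rfl⟩
      obtain ⟨x, hxN', hxk⟩ := h1
      have hdiff : x⁻¹ * (k : G) ∈ L := by
        have : (QuotientGroup.mk x : G ⧸ L) = QuotientGroup.mk (k : G) := hxk
        exact QuotientGroup.eq.mp this
      have hkN' : (k : G) ∈ N' := by
        have h2 : (k : G) = x * (x⁻¹ * (k : G)) := by group
        rw [h2]
        exact N'.mul_mem hxN' (hLN' _ hdiff)
      obtain ⟨k0, hk0, hk0eq⟩ := hkN'
      have h3 : k0 = k := Subtype.ext hk0eq
      rwa [← h3]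
    have hTtriv : ∀ lam : ↥K →* ℂˣ, T lam → lam = 1 := by
      intro lam hl
      exact MonoidHom.ext fun k => hKN k lam hl
    obtain ⟨nn, lam, hn_eq, hlamL, hlamrel, hbound⟩ := key hLn hLK hab φ θ θ e e heθ heθ
    have hall : ∀ j, lam j = 1 := by
      intro j
      apply hTtriv
      constructor
      · exact hlamL j
      · intro k
        have hrel := hlamrel j k
        have h2 : (lam j k : ℂ) * θ.character k =
            (lam j k : ℂ) * (((lam j k : ℂ))⁻¹ * θ.character k) := by rw [← hrel]
        rw [h2, ← mul_assoc, mul_inv_cancel₀ (Units.ne_zero (lam j k)), one_mul]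
    have hle := hbound hall
    rw [homDim_self θ, hn_eq] at hle
    have he1 : e = 1 := by
      have h4 : e ≤ e * e := Nat.le_mul_of_pos_left e hepos
      omega
    refine ⟨θ, hθsimple, fun l => ?_⟩
    have := heθ l
    rw [he1, Nat.cast_one, one_mul] at this
    exact this
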